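/- Let a, b be real numbers with b > 0 and a·b ≥ 1/4. Then for all natural numbers k and l, D(l + k) ≤ b^(2^k − 1) · D(l)^(2^k) · (1 + a/(b · D(l)²))^(2^k − 1). -/

import Mathlib

theorem stmt_3 (a b : ℝ) (hb : 0 < b) (hab : a * b ≥ 1/4)
    (D : ℕ → ℝ) (hD0 : D 0 = 1) (hD : ∀ n, D (n + 1) = a + b * D n ^ 2) :
    ∀ k l : ℕ,
      D (l + k) ≤ b ^ (2 ^ k - 1) * D l ^ (2 ^ k) * (1 + a / (b * D l ^ 2)) ^ (2 ^ k - 1) := by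
  have ha : 0 < a := by nlinarith
  have hDpos : ∀ n, 1 ≤ D n := by
    intro n
    induction n with
    | zero => rw [hD0]
    | succ n ih =>
      rw [hD n]
      nlinarith [sq_nonneg (2 * b * D n - 1)]
  intro k
  induction k with
  | zero => intro l; simp
  | succ k ih =>
    intro l
    have hDl : 1 ≤ D l := hDpos l
    have hDl0 : (0:ℝ) < D l := by linarith
    obtain ⟨C, hCdef⟩ : ∃ C : ℝ, C = 1 + a / (b * D l ^ 2) := ⟨_, rfl⟩
    rw [← hCdef]
    set m := 2 ^ k - 1 with hm
    have hn : 2 ^ k = m + 1 := by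
      have := Nat.one_le_two_pow (n := k); omega
    have e1 : 2 ^ (k + 1) - 1 = 2 * m + 1 := by rw [pow_succ]; omega
    have e2 : 2 ^ (k + 1) = 2 * m + 2 := by rw [pow_succ]; omega
    obtain ⟨P, hP⟩ : ∃ P : ℝ, P = b ^ m * D l ^ (m + 1) * C ^ m := ⟨_, rfl⟩
    have hIH : D (l + k) ≤ P := by
      have h := ih l
      rw [hn, ← hCdef] at h
      rw [hP]
      exact h
    have hbDC : 1 ≤ b * D l * C := by
      have h1 : D l ≤ b * D l ^ 2 + a := by nlinarith [sq_nonneg (2 * b * D l - 1)]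
      have h2 : b * D l * C = (b * D l ^ 2 + a) / D l := by
        rw [hCdef]; field_simp
      rw [h2, le_div_iff₀ hDl0]; linarith
    have hkey : D l ≤ P := by
      have h3 : (1:ℝ) ≤ (b * D l * C) ^ m := one_le_pow₀ hbDC
      have h4 : P = D l * (b * D l * C) ^ m := by rw [hP]; ring
      rw [h4]
      nlinarith
    have hDk : 0 ≤ D (l + k) := by linarith [hDpos (l + k)]
    have hgoal : a + b * D (l + k) ^ 2 ≤ b ^ (2 * m + 1) * D l ^ (2 * m + 2) * C ^ (2 * m + 1) := by
      have hRHS : b ^ (2 * m + 1) * D l ^ (2 * m + 2) * C ^ (2 * m + 1) = b * P ^ 2 * C := by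
        rw [hP]; ring
      rw [hRHS]
      have hsq : D (l + k) ^ 2 ≤ P ^ 2 := by nlinarith
      have hstep1 : b * D (l + k) ^ 2 ≤ b * P ^ 2 :=
        mul_le_mul_of_nonneg_left hsq hb.le
      have hexp : b * P ^ 2 * C = b * P ^ 2 + a * (P / D l) ^ 2 := by
        rw [hCdef]; field_simp
      have h3 : 1 ≤ P / D l := (one_le_div hDl0).mpr hkey
      have hsq2 : (1:ℝ) ≤ (P / D l) ^ 2 := one_le_pow₀ h3
      have h5 : a ≤ a * (P / D l) ^ 2 := le_mul_of_one_le_right ha.le hsq2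
      linarith
    calc D (l + (k + 1)) = a + b * D (l + k) ^ 2 := by
          rw [show l + (k + 1) = (l + k) + 1 from rfl, hD (l + k)]
      _ ≤ b ^ (2 * m + 1) * D l ^ (2 * m + 2) * C ^ (2 * m + 1) := hgoal
      _ = b ^ (2 ^ (k + 1) - 1) * D l ^ (2 ^ (k + 1)) * C ^ (2 ^ (k + 1) - 1) := by
          rw [e1, e2]
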